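/- Let H be a real Hilbert space, V a proper closed subspace with finite-dimensional orthogonal complement V⊥, and A : H → H a bounded self-adjoint injective operator. Set A11 := P_{V⊥}A|_{V⊥}, A12 := P_{V⊥}A|_V, A22 := P_V A|_V, let Ã11 denote the (invertible, self-adjoint) restriction of A11 to im A11, Ã12 := P_{im A11} ∘ A12 : V → im A11, T12 := P_{ker A11} ∘ A12 : V → ker A11, V1 := range of T12* (a finite-dimensional subspace of V), and Ṽ := ker T12, so that V = V1 ⊕ Ṽ orthogonally and T12* : ker A11 → V1 is invertible. Define Γ1 := (T12*)^{−1} ∘ P_{V1} ∘ (Ã12* Ã11^{−1} Ã12 − A22)|_Ṽ : Ṽ → ker A11 and Γ0 := P_Ṽ ∘ (A22 − Ã12* Ã11^{−1} Ã12)|_Ṽ : Ṽ → Ṽ. Then Γ0 is bounded and symmetric (self-adjoint on Ṽ); and for any differentiable u : ℝ → V⊥, v : ℝ → V and continuous f : ℝ → V, writing u = u1 + ũ with u1 = P_{ker A11}u, ũ = P_{im A11}u and v = v1 + ṽ with v1 = P_{V1}v, ṽ = P_Ṽ v, the system { P_{V⊥}( A(u+v) )' = 0 and P_V( A(u+v)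 )' = −v + f } holds on ℝ if and only if the four equations hold on ℝ: (u1 − Γ1 ṽ)' = −(T12*)^{−1} v1 + (T12*)^{−1} P_{V1} f, (ũ + Ã11^{−1} Ã12 ṽ)' = 0, v1' = 0, and Γ0 ṽ' = −ṽ + P_Ṽ f. -/

import Mathlib

set_option synthInstance.maxHeartbeats 1000000
set_option maxHeartbeats 4000000

open ContinuousLinearMap

private lemma proj_coe_congr {E : Type*} [NormedAddCommGroup E] [InnerProductSpace ℝ E]
    {p q : Submodule ℝ E} [CompleteSpace p] [CompleteSpace q] (h : p = q) (x : E) :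
    ((Submodule.orthogonalProjectionOnto p x : E)) = ((Submodule.orthogonalProjectionOnto q x : E)) := by
  subst h; rfl

/-- **Reduction of the steady kinetic equation to canonical form.**
With `A` bounded self-adjoint injective, `A11, A12, A22` the blocks of `A` with respect to
`H = V⊥ ⊕ V`, `Ã11` the invertible restriction of `A11` to `R = im A11`, `T12 = P_{ker A11} A12`,
`V1 = im T12*`, `Ṽ = ker T12`, `Γ1 = (T12*)⁻¹ P_{V1}(Ã12* Ã11⁻¹ Ã12 − A22)|_Ṽ` and
`Γ0 = P_Ṽ (A22 − Ã12* Ã11⁻¹ Ã12)|_Ṽ`: the operator `Γ0` is symmetric, `Ṽ = V1ᗮ`, and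
the system `(P_{V⊥} A(u+v))' = 0`, `(P_V A(u+v))' = −v + f` is equivalent to the four
equations `(u1 − Γ1 ṽ)' = −(T12*)⁻¹ v1 + (T12*)⁻¹ P_{V1} f`, `(ũ + Ã11⁻¹ Ã12 ṽ)' = 0`,
`v1' = 0`, `Γ0 ṽ' = −ṽ + P_Ṽ f`. -/
theorem canonical_form_reduction
    {H : Type*} [NormedAddCommGroup H] [InnerProductSpace ℝ H] [CompleteSpace H]
    (V : Submodule ℝ H) (hVclosed : IsClosed (V : Set H)) (hVproper : V ≠ ⊤)
    [CompleteSpace ↥V] [FiniteDimensional ℝ ↥Vᗮ]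
    (A : H →L[ℝ] H) (hA : IsSelfAdjoint A) (hAinj : Function.Injective A)
    (A11 : ↥Vᗮ →L[ℝ] ↥Vᗮ)
    (hA11 : A11 = (Submodule.orthogonalProjectionOnto Vᗮ).comp (A.comp Vᗮ.subtypeL))
    (A12 : ↥V →L[ℝ] ↥Vᗮ)
    (hA12 : A12 = (Submodule.orthogonalProjectionOnto Vᗮ).comp (A.comp V.subtypeL))
    (A22 : ↥V →L[ℝ] ↥V)
    (hA22 : A22 = (Submodule.orthogonalProjectionOnto V).comp (A.comp V.subtypeL))
    (K : Submodule ℝ ↥Vᗮ) (hK : K = LinearMap.ker (A11 : ↥Vᗮ →ₗ[ℝ] ↥Vᗮ))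
    (R : Submodule ℝ ↥Vᗮ) (hR : R = LinearMap.range (A11 : ↥Vᗮ →ₗ[ℝ] ↥Vᗮ))
    -- `Ã11`: the invertible self-adjoint restriction of `A11` to `R = im A11`
    (At11 : ↥R →L[ℝ] ↥R) (hAt11 : ∀ x : ↥R, (At11 x : ↥Vᗮ) = A11 (x : ↥Vᗮ))
    (At11inv : ↥R →L[ℝ] ↥R)
    (hAt11inv₁ : At11.comp At11inv = 1) (hAt11inv₂ : At11inv.comp At11 = 1)
    -- `Ã12 = P_{im A11} ∘ A12` and `T12 = P_{ker A11} ∘ A12`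
    (At12 : ↥V →L[ℝ] ↥R) (hAt12 : At12 = (Submodule.orthogonalProjectionOnto R).comp A12)
    (T12 : ↥V →L[ℝ] ↥K) (hT12 : T12 = (Submodule.orthogonalProjectionOnto K).comp A12)
    -- `V1 = im T12*` and `Ṽ = ker T12`
    (V1 : Submodule ℝ ↥V) (hV1 : V1 = LinearMap.range (adjoint (𝕜 := ℝ) (E := ↥V) (F := ↥K) T12 : ↥K →ₗ[ℝ] ↥V))
    (Vt : Submodule ℝ ↥V) (hVt : Vt = LinearMap.ker (T12 : ↥V →ₗ[ℝ] ↥K)) [CompleteSpace ↥Vt]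
    [FiniteDimensional ℝ ↥V1]
    -- `(T12*)⁻¹ : V1 → ker A11`, the inverse of the invertible map `T12* : ker A11 → V1`
    (Tinv : ↥V1 →L[ℝ] ↥K)
    (hTinv₁ : ∀ r : ↥K, Tinv (Submodule.orthogonalProjectionOnto V1 (adjoint (𝕜 := ℝ) (E := ↥V) (F := ↥K) T12 r)) = r)
    (hTinv₂ : ∀ w : ↥V1, adjoint (𝕜 := ℝ) (E := ↥V) (F := ↥K) T12 (Tinv w) = (w : ↥V))
    -- `Γ1` and `Γ0`
    (Γ1 : ↥Vt →L[ℝ] ↥K)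
    (hΓ1 : Γ1 = Tinv.comp ((Submodule.orthogonalProjectionOnto V1).comp
      ((((adjoint (𝕜 := ℝ) (E := ↥V) (F := ↥R) At12).comp (At11inv.comp At12) - A22)).comp Vt.subtypeL)))
    (Γ0 : ↥Vt →L[ℝ] ↥Vt)
    (hΓ0 : Γ0 = (Submodule.orthogonalProjectionOnto Vt).comp
      ((A22 - (adjoint (𝕜 := ℝ) (E := ↥V) (F := ↥R) At12).comp (At11inv.comp At12)).comp Vt.subtypeL)) :
    -- `Γ0` is bounded symmetric (self-adjoint on `Ṽ`); `V = V1 ⊕ Ṽ` orthogonally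
    (∀ x y : ↥Vt, (inner ℝ (Γ0 x) y : ℝ) = inner ℝ x (Γ0 y)) ∧
    Vt = V1ᗮ ∧
    -- equivalence of the two systems
    (∀ (u : ℝ → ↥Vᗮ) (u' : ℝ → ↥Vᗮ) (v : ℝ → ↥V) (v' : ℝ → ↥V) (f : ℝ → ↥V),
      (∀ x : ℝ, HasDerivAt u (u' x) x) → (∀ x : ℝ, HasDerivAt v (v' x) x) →
      Continuous f →
      ((∀ x : ℝ,
          Submodule.orthogonalProjectionOnto Vᗮ (A ((u' x : H) + (v' x : H))) = 0 ∧
          Submodule.orthogonalProjectionOnto V (A ((u' x : H) + (v' x : H))) = -(v x) + f x) ↔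
        (∀ x : ℝ,
          Submodule.orthogonalProjectionOnto K (u' x) - Γ1 (Submodule.orthogonalProjectionOnto Vt (v' x)) =
            -(Tinv (Submodule.orthogonalProjectionOnto V1 (v x))) + Tinv (Submodule.orthogonalProjectionOnto V1 (f x)) ∧
          Submodule.orthogonalProjectionOnto R (u' x) + At11inv (At12 (Submodule.orthogonalProjectionOnto Vt (v' x))) = 0 ∧
          Submodule.orthogonalProjectionOnto V1 (v' x) = 0 ∧
          Γ0 (Submodule.orthogonalProjectionOnto Vt (v' x)) =
            -(Submodule.orthogonalProjectionOnto Vt (v x)) + Submodule.orthogonalProjectionOnto Vt (f x)))) := by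
  -- abbreviations
  set S : ↥V →L[ℝ] ↥V := A22 - (adjoint (𝕜 := ℝ) (E := ↥V) (F := ↥R) At12).comp (At11inv.comp At12) with hS
  -- basic symmetry of A
  have hAsym : ∀ x y : H, (inner ℝ (A x) y : ℝ) = inner ℝ x (A y) := fun x y => hA.isSymmetric x y
  -- A11 is symmetric
  have hA11sym : ∀ x y : ↥Vᗮ, (inner ℝ (A11 x) y : ℝ) = inner ℝ x (A11 y) := by
    intro x y
    rw [hA11]
    simp only [ContinuousLinearMap.comp_apply, Submodule.subtypeL_apply]
    rw [Submodule.inner_orthogonalProjectionOnto_eq_of_mem_right, Submodule.inner_orthogonalProjectionOnto_eq_of_mem_left,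
      hAsym]
  -- A22 is symmetric
  have hA22sym : ∀ x y : ↥V, (inner ℝ (A22 x) y : ℝ) = inner ℝ x (A22 y) := by
    intro x y
    rw [hA22]
    simp only [ContinuousLinearMap.comp_apply, Submodule.subtypeL_apply]
    rw [Submodule.inner_orthogonalProjectionOnto_eq_of_mem_right, Submodule.inner_orthogonalProjectionOnto_eq_of_mem_left,
      hAsym]
  -- R = Kᗮ
  have hRK : R = Kᗮ := by
    have hle : R ≤ Kᗮ := by
      rw [hR, hK]
      rintro _ ⟨w, rfl⟩
      intro y hy
      rw [LinearMap.mem_ker] at hy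
      have : (inner ℝ (A11 y) w : ℝ) = inner ℝ y (A11 w) := hA11sym y w
      rw [show A11 y = 0 from hy] at this
      simpa using this.symm
    have hfr : Module.finrank ℝ ↥Kᗮ ≤ Module.finrank ℝ ↥R := by
      have h1 : Module.finrank ℝ ↥(LinearMap.ker (A11 : ↥Vᗮ →ₗ[ℝ] ↥Vᗮ)) + Module.finrank ℝ ↥(LinearMap.ker (A11 : ↥Vᗮ →ₗ[ℝ] ↥Vᗮ))ᗮ
          = Module.finrank ℝ ↥Vᗮ :=
        Submodule.finrank_add_finrank_orthogonal (LinearMap.ker (A11 : ↥Vᗮ →ₗ[ℝ] ↥Vᗮ))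
      have h2 : Module.finrank ℝ ↥(LinearMap.range (A11 : ↥Vᗮ →ₗ[ℝ] ↥Vᗮ)) + Module.finrank ℝ ↥(LinearMap.ker (A11 : ↥Vᗮ →ₗ[ℝ] ↥Vᗮ))
          = Module.finrank ℝ ↥Vᗮ := LinearMap.finrank_range_add_finrank_ker (A11 : ↥Vᗮ →ₗ[ℝ] ↥Vᗮ)
      rw [hR, hK]
      omega
    exact (Submodule.eq_of_le_of_finrank_le hle hfr)
  -- Vt = V1ᗮ
  have hVtV1 : Vt = V1ᗮ := by
    ext b
    rw [hVt, hV1, LinearMap.mem_ker, Submodule.mem_orthogonal]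
    constructor
    · rintro h _ ⟨r, rfl⟩
      simp only [ContinuousLinearMap.coe_coe] at h ⊢
      rw [adjoint_inner_left, h, inner_zero_right]
    · intro h
      have : ∀ r : ↥K, (inner ℝ r (T12 b) : ℝ) = 0 := by
        intro r
        have h2 : (inner ℝ ((adjoint (𝕜 := ℝ) (E := ↥V) (F := ↥K) T12) r) b : ℝ) = 0 := h _ ⟨r, rfl⟩
        rwa [adjoint_inner_left] at h2
      have := this (T12 b)
      rwa [inner_self_eq_zero] at this
  -- decomposition in Vᗮ
  have hdecK : ∀ a : ↥Vᗮ, ((Submodule.orthogonalProjectionOnto K a : ↥Vᗮ)) + (Submodule.orthogonalProjectionOnto R a : ↥Vᗮ) = a := by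
    intro a
    rw [proj_coe_congr hRK]
    exact Submodule.starProjection_add_starProjection_orthogonal (K := K) a
  -- decomposition in V
  have hdecV : ∀ w : ↥V, ((Submodule.orthogonalProjectionOnto V1 w : ↥V)) + (Submodule.orthogonalProjectionOnto Vt w : ↥V) = w := by
    intro w
    rw [proj_coe_congr hVtV1]
    exact Submodule.starProjection_add_starProjection_orthogonal (K := V1) w
  -- projection/membership utilities in Vᗮ
  have hT12e : ∀ w : ↥V, T12 w = Submodule.orthogonalProjectionOnto K (A12 w) := by
    intro w; rw [hT12]; rfl
  have hAt12e : ∀ w : ↥V, At12 w = Submodule.orthogonalProjectionOnto R (A12 w) := by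
    intro w; rw [hAt12]; rfl
  have hPK_A11 : ∀ x : ↥Vᗮ, Submodule.orthogonalProjectionOnto K (A11 x) = 0 := by
    intro x
    rw [Submodule.orthogonalProjectionOnto_eq_zero_iff, ← hRK, hR]
    exact ⟨x, rfl⟩
  have hPR_A11 : ∀ x : ↥Vᗮ, ((Submodule.orthogonalProjectionOnto R (A11 x) : ↥Vᗮ)) = A11 x := by
    intro x
    rw [← Submodule.starProjection_apply, Submodule.starProjection_eq_self_iff, hR]
    exact ⟨x, rfl⟩
  have hA11K : ∀ x : ↥Vᗮ, A11 ((Submodule.orthogonalProjectionOnto K x : ↥Vᗮ)) = 0 := by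
    intro x
    have hm : ((Submodule.orthogonalProjectionOnto K x : ↥Vᗮ)) ∈ LinearMap.ker (A11 : ↥Vᗮ →ₗ[ℝ] ↥Vᗮ) := by
      rw [← hK]; exact (Submodule.orthogonalProjectionOnto K x).2
    exact hm
  have hA11R : ∀ x : ↥Vᗮ, A11 x = (At11 (Submodule.orthogonalProjectionOnto R x) : ↥Vᗮ) := by
    intro x
    rw [hAt11]
    conv_lhs => rw [← hdecK x]
    rw [map_add, hA11K, zero_add]
  -- P_V (A a) in terms of the adjoints, for a ∈ Vᗮ
  have hPVA : ∀ a : ↥Vᗮ, Submodule.orthogonalProjectionOnto V (A (a : H)) =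
      adjoint (𝕜 := ℝ) (E := ↥V) (F := ↥K) T12 (Submodule.orthogonalProjectionOnto K a) + adjoint (𝕜 := ℝ) (E := ↥V) (F := ↥R) At12 (Submodule.orthogonalProjectionOnto R a) := by
    intro a
    apply ext_inner_right ℝ
    intro w
    rw [Submodule.inner_orthogonalProjectionOnto_eq_of_mem_right, hAsym, inner_add_left,
      adjoint_inner_left, adjoint_inner_left, hT12e, hAt12e,
      Submodule.inner_orthogonalProjectionOnto_eq_of_mem_left, Submodule.inner_orthogonalProjectionOnto_eq_of_mem_left,
      ← inner_add_left, hdecK, hA12]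
    simp only [ContinuousLinearMap.comp_apply, Submodule.subtypeL_apply]
    rw [Submodule.inner_orthogonalProjectionOnto_eq_of_mem_left]
  -- inverse relations
  have hinv1 : ∀ z : ↥R, At11 (At11inv z) = z := by
    intro z
    rw [← ContinuousLinearMap.comp_apply, hAt11inv₁, ContinuousLinearMap.one_apply]
  have hinv2 : ∀ z : ↥R, At11inv (At11 z) = z := by
    intro z
    rw [← ContinuousLinearMap.comp_apply, hAt11inv₂, ContinuousLinearMap.one_apply]
  -- symmetry of At11, At11inv, S
  have hAt11sym : ∀ x y : ↥R, (inner ℝ (At11 x) y : ℝ) = inner ℝ x (At11 y) := by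
    intro x y
    have h3 := hA11sym (x : ↥Vᗮ) (y : ↥Vᗮ)
    rw [← hAt11, ← hAt11] at h3
    exact h3
  have hAt11invsym : ∀ x y : ↥R, (inner ℝ (At11inv x) y : ℝ) = inner ℝ x (At11inv y) := by
    intro x y
    conv_lhs => rw [← hinv1 y]
    rw [← hAt11sym, hinv1]
  have hSsym : ∀ x y : ↥V, (inner ℝ (S x) y : ℝ) = inner ℝ x (S y) := by
    intro x y
    simp only [hS, ContinuousLinearMap.sub_apply, ContinuousLinearMap.comp_apply,
      inner_sub_left, inner_sub_right]
    rw [hA22sym, adjoint_inner_left, adjoint_inner_right, hAt11invsym]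
  -- Γ0 and Γ1 in terms of S
  have hΓ0e : ∀ x : ↥Vt, Γ0 x = Submodule.orthogonalProjectionOnto Vt (S (x : ↥V)) := by
    intro x; rw [hΓ0]; rfl
  have hΓ1e : ∀ x : ↥Vt, Γ1 x = -(Tinv (Submodule.orthogonalProjectionOnto V1 (S (x : ↥V)))) := by
    intro x
    rw [hΓ1]
    have hx : (((adjoint (𝕜 := ℝ) (E := ↥V) (F := ↥R) At12).comp (At11inv.comp At12) - A22)) ((x : ↥V)) = -(S (x : ↥V)) := by
      simp [hS]
    simp only [ContinuousLinearMap.comp_apply, Submodule.subtypeL_apply, hx, map_neg]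
  -- goal 1 : Γ0 symmetric
  have goal1 : ∀ x y : ↥Vt, (inner ℝ (Γ0 x) y : ℝ) = inner ℝ x (Γ0 y) := by
    intro x y
    rw [hΓ0e, hΓ0e, Submodule.inner_orthogonalProjectionOnto_eq_of_mem_right,
      Submodule.inner_orthogonalProjectionOnto_eq_of_mem_left, hSsym]
  -- elements of V1 project to zero in Vt
  have hptV1 : ∀ r : ↥K, Submodule.orthogonalProjectionOnto Vt ((adjoint (𝕜 := ℝ) (E := ↥V) (F := ↥K) T12 r : ↥V)) = 0 := by
    intro r
    rw [Submodule.orthogonalProjectionOnto_eq_zero_iff, hVtV1]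
    apply Submodule.le_orthogonal_orthogonal
    rw [hV1]
    exact ⟨r, rfl⟩
  -- splitting of the original system
  have hsplit1 : ∀ (a : ↥Vᗮ) (b : ↥V),
      Submodule.orthogonalProjectionOnto Vᗮ (A ((a : H) + (b : H))) = A11 a + A12 b := by
    intro a b
    rw [hA11, hA12]
    simp only [ContinuousLinearMap.comp_apply, Submodule.subtypeL_apply]
    rw [← map_add, ← map_add]
  have hsplit2 : ∀ (a : ↥Vᗮ) (b : ↥V),
      Submodule.orthogonalProjectionOnto V (A ((a : H) + (b : H))) =
        adjoint (𝕜 := ℝ) (E := ↥V) (F := ↥K) T12 (Submodule.orthogonalProjectionOnto K a) + adjoint (𝕜 := ℝ) (E := ↥V) (F := ↥R) At12 (Submodule.orthogonalProjectionOnto R a)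
          + A22 b := by
    intro a b
    rw [hA22]
    simp only [ContinuousLinearMap.comp_apply, Submodule.subtypeL_apply]
    rw [← hPVA, ← map_add, ← map_add]
  refine ⟨goal1, hVtV1, ?_⟩
  intro u u' v v' f hu hv hf
  constructor
  · intro h x
    obtain ⟨h1, h2⟩ := h x
    set a := u' x with ha
    set b := v' x with hb
    set c : ↥V := -(v x) + f x with hc
    rw [hsplit1] at h1
    rw [hsplit2] at h2
    -- kernel part of the first equation
    have eT : T12 b = 0 := by
      have h3 := congrArg (Submodule.orthogonalProjectionOnto K) h1
      rw [map_add, map_zero, hPK_A11, zero_add, ← hT12e] at h3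
      exact h3
    have hbVt : b ∈ Vt := by rw [hVt]; exact eT
    have hbt : ((Submodule.orthogonalProjectionOnto Vt b : ↥V)) = b :=
      Submodule.starProjection_eq_self_iff.mpr hbVt
    have hg3 : Submodule.orthogonalProjectionOnto V1 b = 0 := by
      rw [Submodule.orthogonalProjectionOnto_eq_zero_iff, ← hVtV1]; exact hbVt
    -- range part of the first equation
    have eR : At11 (Submodule.orthogonalProjectionOnto R a) + At12 b = 0 := by
      have h3 := congrArg (Submodule.orthogonalProjectionOnto R) h1
      rw [map_add, map_zero, ← hAt12e] at h3
      have h4 : Submodule.orthogonalProjectionOnto R (A11 a) = At11 (Submodule.orthogonalProjectionOnto R a) := by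
        apply Subtype.ext
        rw [hPR_A11]
        exact hA11R a
      rw [h4] at h3
      exact h3
    have eR' : Submodule.orthogonalProjectionOnto R a = -(At11inv (At12 b)) := by
      have h3 := congrArg At11inv eR
      rw [map_add, map_zero, hinv2] at h3
      exact eq_neg_of_add_eq_zero_left h3
    have hg2 : Submodule.orthogonalProjectionOnto R a
        + At11inv (At12 ((Submodule.orthogonalProjectionOnto Vt b : ↥V))) = 0 := by
      rw [hbt, eR', neg_add_cancel]
    -- rewrite the second equation using eR'
    rw [eR', map_neg] at h2
    have h2'' : (adjoint (𝕜 := ℝ) (E := ↥V) (F := ↥K) T12 (Submodule.orthogonalProjectionOnto K a) : ↥V) + S b = c := by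
      rw [hS]
      simp only [ContinuousLinearMap.sub_apply, ContinuousLinearMap.comp_apply]
      rw [← h2]
      abel
    have hg4 : Γ0 (Submodule.orthogonalProjectionOnto Vt b)
        = -(Submodule.orthogonalProjectionOnto Vt (v x)) + Submodule.orthogonalProjectionOnto Vt (f x) := by
      have hct : Submodule.orthogonalProjectionOnto Vt c
          = -(Submodule.orthogonalProjectionOnto Vt (v x)) + Submodule.orthogonalProjectionOnto Vt (f x) := by
        rw [hc, map_add, map_neg]
      rw [← hct, hΓ0e, hbt]
      have h4 := congrArg (Submodule.orthogonalProjectionOnto Vt) h2''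
      rw [map_add, hptV1, zero_add] at h4
      exact h4
    have hg1 : Submodule.orthogonalProjectionOnto K a - Γ1 (Submodule.orthogonalProjectionOnto Vt b)
        = -(Tinv (Submodule.orthogonalProjectionOnto V1 (v x))) + Tinv (Submodule.orthogonalProjectionOnto V1 (f x)) := by
      have hrhs : -(Tinv (Submodule.orthogonalProjectionOnto V1 (v x)))
          + Tinv (Submodule.orthogonalProjectionOnto V1 (f x)) = Tinv (Submodule.orthogonalProjectionOnto V1 c) := by
        rw [hc, map_add, map_neg, map_add, map_neg]
      rw [hrhs, hΓ1e, hbt, sub_neg_eq_add]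
      have h5 := congrArg (fun z => Tinv (Submodule.orthogonalProjectionOnto V1 z)) h2''
      simp only [map_add] at h5
      rw [hTinv₁] at h5
      exact h5
    exact ⟨hg1, hg2, hg3, hg4⟩
  · intro h x
    obtain ⟨g1, g2, g3, g4⟩ := h x
    set a := u' x with ha
    set b := v' x with hb
    set c : ↥V := -(v x) + f x with hc
    have hbVt : b ∈ Vt := by rw [hVtV1]; exact Submodule.orthogonalProjectionOnto_eq_zero_iff.mp g3
    have hbt : ((Submodule.orthogonalProjectionOnto Vt b : ↥V)) = b :=
      Submodule.starProjection_eq_self_iff.mpr hbVt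
    have eT : T12 b = 0 := by rw [hVt] at hbVt; exact hbVt
    have eR' : Submodule.orthogonalProjectionOnto R a = -(At11inv (At12 b)) := by
      rw [hbt] at g2
      exact eq_neg_of_add_eq_zero_left g2
    -- first equation
    have e0 : A11 a + A12 b = 0 := by
      rw [hA11R a, eR', map_neg, hinv1]
      conv_lhs => rw [← hdecK (A12 b)]
      rw [← hT12e, ← hAt12e, eT]
      push_cast
      abel
    -- second equation
    have ePK : Submodule.orthogonalProjectionOnto K a
        = Tinv (Submodule.orthogonalProjectionOnto V1 c - Submodule.orthogonalProjectionOnto V1 (S b)) := by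
      rw [hΓ1e, hbt, sub_neg_eq_add] at g1
      have hrhs : -(Tinv (Submodule.orthogonalProjectionOnto V1 (v x)))
          + Tinv (Submodule.orthogonalProjectionOnto V1 (f x)) = Tinv (Submodule.orthogonalProjectionOnto V1 c) := by
        rw [hc, map_add, map_neg, map_add, map_neg]
      rw [hrhs] at g1
      rw [map_sub]
      exact eq_sub_of_add_eq g1
    have ePtSb : ((Submodule.orthogonalProjectionOnto Vt (S b) : ↥V)) = ((Submodule.orthogonalProjectionOnto Vt c : ↥V)) := by
      have h6 := hΓ0e (Submodule.orthogonalProjectionOnto Vt b)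
      rw [hbt, g4] at h6
      rw [← h6, hc, map_add, map_neg]
    have e2 : adjoint (𝕜 := ℝ) (E := ↥V) (F := ↥K) T12 (Submodule.orthogonalProjectionOnto K a)
        + adjoint (𝕜 := ℝ) (E := ↥V) (F := ↥R) At12 (Submodule.orthogonalProjectionOnto R a) + A22 b = c := by
      rw [ePK, hTinv₂, eR', map_neg, Submodule.coe_sub]
      have hSb : S b = A22 b - adjoint (𝕜 := ℝ) (E := ↥V) (F := ↥R) At12 (At11inv (At12 b)) := by
        simp [hS]
      have hdec := hdecV (S b)
      rw [ePtSb] at hdec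
      have hdc := hdecV c
      calc ((Submodule.orthogonalProjectionOnto V1 c : ↥V)) - ((Submodule.orthogonalProjectionOnto V1 (S b) : ↥V))
            + -(adjoint (𝕜 := ℝ) (E := ↥V) (F := ↥R) At12 (At11inv (At12 b))) + A22 b
          = ((Submodule.orthogonalProjectionOnto V1 c : ↥V)) - ((Submodule.orthogonalProjectionOnto V1 (S b) : ↥V))
            + S b := by rw [hSb]; abel
        _ = ((Submodule.orthogonalProjectionOnto V1 c : ↥V)) - ((Submodule.orthogonalProjectionOnto V1 (S b) : ↥V))
            + (((Submodule.orthogonalProjectionOnto V1 (S b) : ↥V)) + ((Submodule.orthogonalProjectionOnto Vt c : ↥V))) := by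
            rw [hdec]
        _ = ((Submodule.orthogonalProjectionOnto V1 c : ↥V)) + ((Submodule.orthogonalProjectionOnto Vt c : ↥V)) := by abel
        _ = c := hdc
    refine ⟨?_, ?_⟩
    · rw [hsplit1]; exact e0
    · rw [hsplit2]; exact e2
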